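/- Let N be a finite set, p a positive integer, and for a fixed customer segment k let utilities v_i > 0 and weights w_i > 0 for i ∈ N. Fix δ ∈ (0,1) and set v_min = δ · min_{i∈N} v_i. Define g(S) = (Σ_{i∈S} v_i w_i)/(p·v_min + Σ_{i∈S}(v_i − v_min)) for S ⊆ N. If w_min/w_max + 1 ≥ v_max/v_min (where w_min, w_max, v_max are the min/max weights and max utility), then g(S) ≤ (v_i w_i)/(v_i − v_min) for all S ⊆ N with |S| ≤ p and all i ∈ N; i.e., g is monotone nondecreasing over sets of cardinality at most p. -/
import Mathlib


theorem stmt_13 {ι : Type*} [DecidableEq ι] (N : Finset ι) (hN : N.Nonempty)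
    (v w : ι → ℝ) (p : ℕ) (hp : 1 ≤ p) (δ : ℝ) (hδ : δ ∈ Set.Ioo (0 : ℝ) 1)
    (hv : ∀ i ∈ N, 0 < v i) (hw : ∀ i ∈ N, 0 < w i)
    (vmin : ℝ) (hvmin : vmin = δ * N.inf' hN v)
    (g : Finset ι → ℝ)
    (hg : ∀ S : Finset ι,
      g S = (∑ i ∈ S, v i * w i) / ((p : ℝ) * vmin + ∑ i ∈ S, (v i - vmin)))
    (hcond : N.inf' hN w / N.sup' hN w + 1 ≥ N.sup' hN v / vmin) :
    (∀ S : Finset ι, S ⊆ N → S.card ≤ p → ∀ i ∈ N,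
        g S ≤ v i * w i / (v i - vmin)) ∧
      (∀ S : Finset ι, S ⊆ N → ∀ j ∈ N, j ∉ S → (insert j S).card ≤ p →
        g S ≤ g (insert j S)) := by
  obtain ⟨hδ0, hδ1⟩ := hδ
  have hm0 : 0 < N.inf' hN v := (Finset.lt_inf'_iff hN).mpr hv
  have hvmin0 : 0 < vmin := by rw [hvmin]; exact mul_pos hδ0 hm0
  have hvminlt : ∀ i ∈ N, vmin < v i := by
    intro i hi
    calc vmin = δ * N.inf' hN v := hvmin
      _ < N.inf' hN v := mul_lt_of_lt_one_left hm0 hδ1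
      _ ≤ v i := Finset.inf'_le v hi
  have hwmax0 : 0 < N.sup' hN w := by
    obtain ⟨i, hi⟩ := hN
    exact lt_of_lt_of_le (hw i hi) (Finset.le_sup' w hi)
  -- translate the condition
  have hcond' : N.sup' hN w * (N.sup' hN v - vmin) ≤ N.inf' hN w * vmin := by
    have h := hcond
    rw [ge_iff_le, div_le_iff₀ hvmin0] at h
    have h2 : N.inf' hN w / N.sup' hN w * N.sup' hN w = N.inf' hN w :=
      div_mul_cancel₀ _ (ne_of_gt hwmax0)
    nlinarith [mul_le_mul_of_nonneg_right h (le_of_lt hwmax0)]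
  -- key inequality
  have hkey : ∀ i ∈ N, ∀ j ∈ N, w j * (v i - vmin) ≤ w i * v i := by
    intro i hi j hj
    have h1 : w j ≤ N.sup' hN w := Finset.le_sup' w hj
    have h2 : v i ≤ N.sup' hN v := Finset.le_sup' v hi
    have h3 : N.inf' hN w ≤ w i := Finset.inf'_le w hi
    have h4 : vmin ≤ v i := le_of_lt (hvminlt i hi)
    have h5 : 0 ≤ v i - vmin := by linarith
    have h6 : 0 ≤ N.sup' hN w := le_of_lt hwmax0
    have hA : w j * (v i - vmin) ≤ N.sup' hN w * (N.sup' hN v - vmin) :=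
      mul_le_mul h1 (by linarith) h5 h6
    have hB : N.inf' hN w * vmin ≤ w i * v i :=
      mul_le_mul h3 h4 (le_of_lt hvmin0) (le_of_lt (hw i hi))
    linarith
  have hclaim1 : ∀ S : Finset ι, S ⊆ N → S.card ≤ p → ∀ i ∈ N,
      g S ≤ v i * w i / (v i - vmin) := by
    intro S hS hcard i hi
    have hsumpos : 0 ≤ ∑ j ∈ S, (v j - vmin) :=
      Finset.sum_nonneg fun j hj => by have := hvminlt j (hS hj); linarith
    have hp0 : 0 < (p : ℝ) := by exact_mod_cast Nat.lt_of_lt_of_le Nat.zero_lt_one hp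
    have hBpos : 0 < (p : ℝ) * vmin + ∑ j ∈ S, (v j - vmin) := by
      have := mul_pos hp0 hvmin0; linarith
    have hvi : 0 < v i - vmin := sub_pos.mpr (hvminlt i hi)
    rw [hg, div_le_div_iff₀ hBpos hvi]
    have step : ∑ j ∈ S, v j * w j * (v i - vmin) ≤ ∑ j ∈ S, v i * w i * v j := by
      apply Finset.sum_le_sum
      intro j hj
      have hkj := hkey i hi j (hS hj)
      have hvj : 0 < v j := hv j (hS hj)
      nlinarith
    have hsum : ∑ j ∈ S, (v j - vmin) = (∑ j ∈ S, v j) - S.card * vmin := by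
      rw [Finset.sum_sub_distrib, Finset.sum_const, nsmul_eq_mul]
    have hcard' : (S.card : ℝ) ≤ (p : ℝ) := Nat.cast_le.mpr hcard
    have hvw : 0 ≤ v i * w i := le_of_lt (mul_pos (hv i hi) (hw i hi))
    calc (∑ j ∈ S, v j * w j) * (v i - vmin)
        = ∑ j ∈ S, v j * w j * (v i - vmin) := (Finset.sum_mul _ _ _)
      _ ≤ ∑ j ∈ S, v i * w i * v j := step
      _ = v i * w i * ∑ j ∈ S, v j := (Finset.mul_sum _ _ _).symm
      _ ≤ v i * w i * ((p : ℝ) * vmin + ∑ j ∈ S, (v j - vmin)) := by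
          apply mul_le_mul_of_nonneg_left _ hvw
          rw [hsum]
          nlinarith [mul_le_mul_of_nonneg_right hcard' (le_of_lt hvmin0)]
  refine ⟨hclaim1, ?_⟩
  intro S hS j hj hjS hcard
  rw [Finset.card_insert_of_notMem hjS] at hcard
  have h1 := hclaim1 S hS (by omega) j hj
  have hsumpos : 0 ≤ ∑ k ∈ S, (v k - vmin) :=
    Finset.sum_nonneg fun k hk => by have := hvminlt k (hS hk); linarith
  have hp0 : 0 < (p : ℝ) := by exact_mod_cast Nat.lt_of_lt_of_le Nat.zero_lt_one hp
  have hBpos : 0 < (p : ℝ) * vmin + ∑ k ∈ S, (v k - vmin) := by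
    have := mul_pos hp0 hvmin0; linarith
  have hvj : 0 < v j - vmin := sub_pos.mpr (hvminlt j hj)
  have hB'pos : 0 < (p : ℝ) * vmin + (v j - vmin + ∑ k ∈ S, (v k - vmin)) := by
    linarith
  rw [hg S, div_le_div_iff₀ hBpos hvj] at h1
  rw [hg S, hg (insert j S), Finset.sum_insert hjS, Finset.sum_insert hjS,
    div_le_div_iff₀ hBpos hB'pos]
  nlinarith [h1]
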